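/- (Commutator form of the Wigner–Yanase information matrix.) With I^{WY}_{ij}(φ) = Σ_{k,ℓ<d} (4/(√λ_k + √λ_ℓ)²) ⟨k| D_i |ℓ⟩ ⟨ℓ| D_j |k⟩ (where D_i = ∂_i ρ(φ)), one has for all i, j ∈ {1,…,J}: I^{WY}_{ij}(φ) = −4 · Tr[[A_i, √ρ] [A_j, √ρ]], where √ρ = e^{−G/2}/√Z, A_j = U_{R_j}† H_j U_{R_j}, and [X,Y] = XY − YX. -/

import Mathlib

open Matrix

noncomputable section

attribute [local instance] Matrix.linftyOpNormedAddCommGroup Matrix.linftyOpNormedSpace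

/-- Square complex matrices of size `d`. -/
abbrev Mat (d : ℕ) := Matrix (Fin d) (Fin d) ℂ

/-- Descending product `f (a + n - 1) * ⋯ * f (a + 1) * f a` (empty product is `1`). -/
def descProd {d : ℕ} (f : ℕ → Mat d) (a : ℕ) : ℕ → Mat d
  | 0 => 1
  | n + 1 => f (a + n) * descProd f a n

/-- The `j`-th layer `U_j(φ_j) = exp (−i φ_j H_j) V_j`. -/
def layer {d : ℕ} (H V : ℕ → Mat d) (φ : ℕ → ℝ) (j : ℕ) : Mat d :=
  NormedSpace.exp ((-(Complex.I * (φ j : ℂ))) • H j) * V j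

/-- `U_{R_j} = U_j ⋯ U_1`. -/
def UR {d : ℕ} (H V : ℕ → Mat d) (φ : ℕ → ℝ) (j : ℕ) : Mat d :=
  descProd (layer H V φ) 1 j

/-- `U_{L_j} = U_J ⋯ U_j`. -/
def UL {d : ℕ} (H V : ℕ → Mat d) (φ : ℕ → ℝ) (J j : ℕ) : Mat d :=
  descProd (layer H V φ) j (J + 1 - j)

/-- The full layered circuit `U(φ) = U_J ⋯ U_1`. -/
def Ufull {d : ℕ} (H V : ℕ → Mat d) (φ : ℕ → ℝ) (J : ℕ) : Mat d :=
  UR H V φ J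

/-- `B_j = U_{L_{j+1}} H_j U_{L_{j+1}}†`. -/
def Bmat {d : ℕ} (H V : ℕ → Mat d) (φ : ℕ → ℝ) (J j : ℕ) : Mat d :=
  UL H V φ J (j + 1) * H j * (UL H V φ J (j + 1))ᴴ

/-- `A_j = U_{R_j}† H_j U_{R_j}`. -/
def Amat {d : ℕ} (H V : ℕ → Mat d) (φ : ℕ → ℝ) (j : ℕ) : Mat d :=
  (UR H V φ j)ᴴ * H j * UR H V φ j

/-- The thermal state `ρ = e^{−G}/Z`. -/
def thermal {d : ℕ} (G : Mat d) (Z : ℝ) : Mat d :=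
  (Z : ℂ)⁻¹ • NormedSpace.exp (-G)

/-- The parameterized state `ρ(φ) = U(φ) ρ U(φ)†`. -/
def rhoFun {d : ℕ} (H V : ℕ → Mat d) (J : ℕ) (G : Mat d) (Z : ℝ) (φ : ℕ → ℝ) : Mat d :=
  Ufull H V φ J * thermal G Z * (Ufull H V φ J)ᴴ

/-- The sesquilinear form `⟨u| M |v⟩`, conjugate-linear in `u`. -/
def braket {d : ℕ} (u : Fin d → ℂ) (M : Mat d) (v : Fin d → ℂ) : ℂ :=
  star u ⬝ᵥ M.mulVec v

/-- `√ρ = e^{−G/2}/√Z`, the square root of the thermal state. -/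
def sqrtThermal {d : ℕ} (G : Mat d) (Z : ℝ) : Mat d :=
  ((Real.sqrt Z : ℂ))⁻¹ • NormedSpace.exp ((-(2⁻¹ : ℂ)) • G)

attribute [local instance] Matrix.linftyOpNormedRing Matrix.linftyOpNormedAlgebra

lemma descProd_add {d : ℕ} (f : ℕ → Mat d) (a m n : ℕ) :
    descProd f a (n + m) = descProd f (a + m) n * descProd f a m := by
  induction n with
  | zero => simp [descProd]
  | succ n ih =>
    have h : n + 1 + m = (n + m) + 1 := by omega
    rw [h, descProd, ih, descProd, show a + (n + m) = a + m + n from by omega, mul_assoc]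

lemma descProd_congr {d : ℕ} (f g : ℕ → Mat d) (a n : ℕ)
    (h : ∀ k, k < n → f (a + k) = g (a + k)) : descProd f a n = descProd g a n := by
  induction n with
  | zero => rfl
  | succ n ih =>
    rw [descProd, descProd, h n (Nat.lt_succ_self n), ih (fun k hk => h k (by omega))]

lemma descProd_unitary {d : ℕ} (f : ℕ → Mat d)
    (hf : ∀ k, f k ∈ Matrix.unitaryGroup (Fin d) ℂ) (a n : ℕ) :
    descProd f a n ∈ Matrix.unitaryGroup (Fin d) ℂ := by
  induction n with
  | zero => exact one_mem _
  | succ n ih => exact mul_mem (hf _) ih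

lemma exp_skew_unitary {d : ℕ} (A : Mat d) (hA : Aᴴ = -A) :
    NormedSpace.exp A ∈ Matrix.unitaryGroup (Fin d) ℂ := by
  rw [Matrix.mem_unitaryGroup_iff', Matrix.star_eq_conjTranspose,
    ← Matrix.exp_conjTranspose _, hA,
    ← Matrix.exp_add_of_commute (-A) A ((Commute.refl A).neg_left),
    neg_add_cancel, NormedSpace.exp_zero]

lemma layer_unitary {d : ℕ} (H V : ℕ → Mat d) (hH : ∀ j, (H j).IsHermitian)
    (hV : ∀ j, V j ∈ Matrix.unitaryGroup (Fin d) ℂ) (φ : ℕ → ℝ) (j : ℕ) :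
    layer H V φ j ∈ Matrix.unitaryGroup (Fin d) ℂ := by
  refine mul_mem (exp_skew_unitary _ ?_) (hV j)
  rw [Matrix.conjTranspose_smul, (hH j).eq, ← neg_smul]
  congr 1
  simp [Complex.ext_iff]

lemma mem_unitary_mulcancel {d : ℕ} {M : Mat d} (h : M ∈ Matrix.unitaryGroup (Fin d) ℂ) :
    (∀ X : Mat d, M * (Mᴴ * X) = X) ∧ (∀ X : Mat d, Mᴴ * (M * X) = X) ∧
      Mᴴ * M = 1 ∧ M * Mᴴ = 1 := by
  have h1 : Mᴴ * M = 1 := by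
    rw [← Matrix.star_eq_conjTranspose]; exact (Unitary.mem_iff.mp h).1
  have h2 : M * Mᴴ = 1 := by
    rw [← Matrix.star_eq_conjTranspose]; exact (Unitary.mem_iff.mp h).2
  exact ⟨fun X => by rw [← mul_assoc, h2, one_mul],
    fun X => by rw [← mul_assoc, h1, one_mul], h1, h2⟩

lemma Ufull_decomp {d : ℕ} (H V : ℕ → Mat d) (φ : ℕ → ℝ) {J i : ℕ}
    (hi1 : 1 ≤ i) (hiJ : i ≤ J) :
    Ufull H V φ J =
      descProd (layer H V φ) (i + 1) (J - i) * (layer H V φ i * UR H V φ (i - 1)) := by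
  unfold Ufull UR
  have h1 : J = ((J - i) + 1) + (i - 1) := by omega
  conv_lhs => rw [h1]
  rw [descProd_add, show 1 + (i - 1) = i from by omega, descProd_add]
  simp [descProd, mul_assoc]

lemma UR_decomp {d : ℕ} (H V : ℕ → Mat d) (φ : ℕ → ℝ) {i : ℕ} (hi1 : 1 ≤ i) :
    UR H V φ i = layer H V φ i * UR H V φ (i - 1) := by
  unfold UR
  rw [show i = 1 + (i - 1) from by omega, descProd_add]
  simp [descProd, show 1 + (i-1) - 1 = i - 1 from by omega, show 1 + (i - 1) = i from by omega]
lemma exp_real_eq {d : ℕ} (K : Mat d) (x : ℝ) (c : ℂ) :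
    NormedSpace.exp (x • (c • K)) = NormedSpace.exp ((c * (x : ℂ)) • K) := by
  congr 1
  rw [← Complex.coe_smul, smul_smul, mul_comm]

lemma rho_hasDerivAt {d : ℕ} (H V : ℕ → Mat d) (hH : ∀ j, (H j).IsHermitian)
    (hV : ∀ j, V j ∈ Matrix.unitaryGroup (Fin d) ℂ) (G : Mat d) (Z : ℝ)
    {J i : ℕ} (φ : ℕ → ℝ) (hi1 : 1 ≤ i) (hiJ : i ≤ J) :
    HasDerivAt (fun x : ℝ => rhoFun H V J G Z (Function.update φ i x))
      ((-Complex.I) • (Ufull H V φ J *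
        (Amat H V φ i * thermal G Z - thermal G Z * Amat H V φ i) * (Ufull H V φ J)ᴴ))
      (φ i) := by
  classical
  set ρ0 : Mat d := thermal G Z with hρ0
  set C1 : Mat d := descProd (layer H V φ) (i + 1) (J - i) with hC1def
  set C2 : Mat d := UR H V φ (i - 1) with hC2def
  set M : Mat d := (-Complex.I) • H i with hM
  set M' : Mat d := Complex.I • H i with hM'
  set Wm : Mat d := V i * (C2 * (ρ0 * (C2ᴴ * (V i)ᴴ))) with hWm
  set Ei : Mat d := NormedSpace.exp ((-(Complex.I * (φ i : ℂ))) • H i) with hEi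
  -- exponential conversions
  have hMx : ∀ x : ℝ, NormedSpace.exp (x • M) =
      NormedSpace.exp ((-(Complex.I * (x : ℂ))) • H i) := by
    intro x
    rw [hM, exp_real_eq]
    congr 2
    ring
  have hM'x : ∀ x : ℝ, NormedSpace.exp (x • M') =
      NormedSpace.exp ((Complex.I * (x : ℂ)) • H i) := by
    intro x
    rw [hM', exp_real_eq]
  have hconj : ∀ x : ℝ, (NormedSpace.exp ((-(Complex.I * (x : ℂ))) • H i))ᴴ =
      NormedSpace.exp ((Complex.I * (x : ℂ)) • H i) := by
    intro x
    rw [← Matrix.exp_conjTranspose _, Matrix.conjTranspose_smul, (hH i).eq]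
    congr 1
    simp [Complex.ext_iff]
  -- unitarity facts
  have hEiu : Ei ∈ Matrix.unitaryGroup (Fin d) ℂ := by
    refine exp_skew_unitary _ ?_
    rw [Matrix.conjTranspose_smul, (hH i).eq, ← neg_smul]
    congr 1
    simp [Complex.ext_iff]
  obtain ⟨hEc, hEc', -, -⟩ := mem_unitary_mulcancel hEiu
  obtain ⟨hVc, hVc', -, -⟩ := mem_unitary_mulcancel (hV i)
  have hC2u : C2 ∈ Matrix.unitaryGroup (Fin d) ℂ :=
    descProd_unitary _ (layer_unitary H V hH hV φ) 1 (i - 1)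
  obtain ⟨hC2c, hC2c', -, -⟩ := mem_unitary_mulcancel hC2u
  -- commutation of H i with Eiᴴ
  have hHEi : ∀ X : Mat d, H i * (Eiᴴ * X) = Eiᴴ * (H i * X) := by
    have hc : H i * Eiᴴ = Eiᴴ * H i := by
      rw [hEi, hconj (φ i)]
      exact (((Commute.refl (H i)).smul_right
        (Complex.I * (φ i : ℂ))).exp_right).eq
    intro X
    rw [← mul_assoc, hc, mul_assoc]
  -- decompositions
  have hU : Ufull H V φ J = C1 * (Ei * V i * C2) := by
    rw [Ufull_decomp H V φ hi1 hiJ]; rfl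
  have hURi : UR H V φ i = Ei * V i * C2 := by
    rw [UR_decomp H V φ hi1]; rfl
  -- the function, rewritten
  have hfun : ∀ x : ℝ, rhoFun H V J G Z (Function.update φ i x) =
      C1 * NormedSpace.exp (x • M) * (Wm * (NormedSpace.exp (x • M') * C1ᴴ)) := by
    intro x
    have hUx : Ufull H V (Function.update φ i x) J =
        C1 * ((NormedSpace.exp ((-(Complex.I * (x : ℂ))) • H i) * V i) * C2) := by
      rw [Ufull_decomp H V (Function.update φ i x) hi1 hiJ]
      congr 1
      · rw [hC1def]
        apply descProd_congr
        intro k hk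
        have hne : i + 1 + k ≠ i := by omega
        simp [layer, Function.update_apply, hne]
      · congr 1
        · simp [layer, Function.update_apply]
        · rw [hC2def]
          unfold UR
          apply descProd_congr
          intro k hk
          have hne : 1 + k ≠ i := by omega
          simp [layer, Function.update_apply, hne]
    unfold rhoFun
    rw [hUx, hMx x, hM'x x, ← hρ0]
    simp only [Matrix.conjTranspose_mul, hconj x, hWm, mul_assoc]
  -- derivative of the rewritten function
  have hE : HasDerivAt (fun x : ℝ => NormedSpace.exp (x • M))
      (M * NormedSpace.exp ((φ i) • M)) (φ i) := hasDerivAt_exp_smul_const' M (φ i)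
  have hE' : HasDerivAt (fun x : ℝ => NormedSpace.exp (x • M'))
      (M' * NormedSpace.exp ((φ i) • M')) (φ i) := hasDerivAt_exp_smul_const' M' (φ i)
  have hDF := (hE.const_mul C1).mul ((hE'.mul_const (C1ᴴ)).const_mul Wm)
  have hDG := hDF.congr_of_eventuallyEq
    (Filter.Eventually.of_forall fun x => (hfun x))
  -- identify the derivative value
  have hval : C1 * (M * NormedSpace.exp ((φ i) • M)) *
        (Wm * (NormedSpace.exp ((φ i) • M') * C1ᴴ)) +
      C1 * NormedSpace.exp ((φ i) • M) *
        (Wm * (M' * NormedSpace.exp ((φ i) • M') * C1ᴴ)) =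
      (-Complex.I) • (Ufull H V φ J *
        (Amat H V φ i * ρ0 - ρ0 * Amat H V φ i) * (Ufull H V φ J)ᴴ) := by
    have hA : Amat H V φ i = (UR H V φ i)ᴴ * H i * UR H V φ i := rfl
    have hL : C1 * (M * NormedSpace.exp ((φ i) • M)) *
          (Wm * (NormedSpace.exp ((φ i) • M') * C1ᴴ)) +
        C1 * NormedSpace.exp ((φ i) • M) *
          (Wm * (M' * NormedSpace.exp ((φ i) • M') * C1ᴴ)) =
        (-Complex.I) • (C1 * (H i * (Ei * (V i * (C2 * (ρ0 *
            (C2ᴴ * ((V i)ᴴ * (Eiᴴ * C1ᴴ))))))))) +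
          Complex.I • (C1 * (Ei * (V i * (C2 * (ρ0 *
            (C2ᴴ * ((V i)ᴴ * (Eiᴴ * (H i * C1ᴴ))))))))) := by
      rw [hMx (φ i), hM'x (φ i), ← hconj (φ i), hM, hM', ← hEi]
      simp only [Matrix.smul_mul, Matrix.mul_smul, hWm, mul_assoc, hHEi]
    have hP : Ufull H V φ J * (Amat H V φ i * ρ0) * (Ufull H V φ J)ᴴ =
        C1 * (H i * (Ei * (V i * (C2 * (ρ0 *
          (C2ᴴ * ((V i)ᴴ * (Eiᴴ * C1ᴴ)))))))) := by
      rw [hU, hA, hURi]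
      simp only [Matrix.conjTranspose_mul, mul_assoc, hEc, hEc', hVc, hVc', hC2c, hC2c']
    have hQ : Ufull H V φ J * (ρ0 * Amat H V φ i) * (Ufull H V φ J)ᴴ =
        C1 * (Ei * (V i * (C2 * (ρ0 *
          (C2ᴴ * ((V i)ᴴ * (Eiᴴ * (H i * C1ᴴ)))))))) := by
      rw [hU, hA, hURi]
      simp only [Matrix.conjTranspose_mul, mul_assoc, hEc, hEc', hVc, hVc', hC2c, hC2c']
    rw [hL, Matrix.mul_sub, Matrix.sub_mul, smul_sub, hP, hQ,
      sub_eq_add_neg, ← neg_smul, neg_neg]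
  exact hval ▸ hDG
lemma sqrtThermal_mul_self {d : ℕ} (G : Mat d) {Z : ℝ} (hZ : 0 < Z) :
    sqrtThermal G Z * sqrtThermal G Z = thermal G Z := by
  unfold sqrtThermal thermal
  rw [Matrix.smul_mul, Matrix.mul_smul, smul_smul,
    ← Matrix.exp_add_of_commute _ _ (Commute.refl _)]
  congr 1
  · rw [← mul_inv]
    norm_cast
    rw [Real.mul_self_sqrt hZ.le]
  · rw [← add_smul]
    norm_num

lemma sqrtThermal_herm {d : ℕ} {G : Mat d} (hG : G.IsHermitian) (Z : ℝ) :
    (sqrtThermal G Z)ᴴ = sqrtThermal G Z := by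
  unfold sqrtThermal
  rw [Matrix.conjTranspose_smul, ← Matrix.exp_conjTranspose _,
    Matrix.conjTranspose_smul, hG.eq]
  congr 1
  · simp [Complex.ext_iff]
  · congr 1
    simp [Complex.ext_iff]

lemma dot_self_eq {d : ℕ} (w : Fin d → ℂ) :
    star w ⬝ᵥ w = ((∑ m, Complex.normSq (w m) : ℝ) : ℂ) := by
  push_cast
  apply Finset.sum_congr rfl
  intro m _
  simp [Complex.normSq_eq_conj_mul_self, Complex.star_def]

lemma sqrtThermal_eigen {d : ℕ} {G : Mat d} (hG : G.IsHermitian) {Z : ℝ} (hZ : 0 < Z)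
    {lam : ℝ} (hlam : 0 < lam) {w : Fin d → ℂ}
    (hw : (thermal G Z).mulVec w = (lam : ℂ) • w) :
    (sqrtThermal G Z).mulVec w = ((Real.sqrt lam : ℝ) : ℂ) • w := by
  classical
  set S := sqrtThermal G Z with hS
  set c : ℝ := Real.sqrt lam with hc
  have hcpos : 0 < c := Real.sqrt_pos.mpr hlam
  set u : Fin d → ℂ := S.mulVec w - (c : ℂ) • w with hu
  have hcc : (c : ℂ) * (c : ℂ) = (lam : ℂ) := by
    norm_cast
    exact Real.mul_self_sqrt hlam.le
  have h1 : S.mulVec (S.mulVec w) = (lam : ℂ) • w := by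
    rw [Matrix.mulVec_mulVec, sqrtThermal_mul_self G hZ, hw]
  have hkey : S.mulVec u + (c : ℂ) • u = 0 := by
    rw [hu, Matrix.mulVec_sub, Matrix.mulVec_smul, h1, smul_sub, smul_smul, hcc]
    abel
  have hz : star u ⬝ᵥ (S.mulVec u) + (c : ℂ) * (star u ⬝ᵥ u) = 0 := by
    have h2 := congrArg (fun y => star u ⬝ᵥ y) hkey
    simpa [dotProduct_add, dotProduct_smul, smul_eq_mul] using h2
  set E : Mat d := NormedSpace.exp ((-(4⁻¹ : ℂ)) • G) with hE
  have hEE : NormedSpace.exp ((-(2⁻¹ : ℂ)) • G) = E * E := by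
    rw [hE, ← Matrix.exp_add_of_commute _ _ (Commute.refl _), ← add_smul]
    norm_num
  have hEH : Eᴴ = E := by
    rw [hE, ← Matrix.exp_conjTranspose _, Matrix.conjTranspose_smul, hG.eq]
    congr 1
    simp [Complex.ext_iff]
  have hquad : star u ⬝ᵥ S.mulVec u =
      (((Real.sqrt Z)⁻¹ : ℝ) : ℂ) * (star (E.mulVec u) ⬝ᵥ (E.mulVec u)) := by
    rw [hS]
    unfold sqrtThermal
    rw [hEE, Matrix.smul_mulVec, dotProduct_smul, smul_eq_mul,
      ← Matrix.mulVec_mulVec, Matrix.dotProduct_mulVec, Matrix.star_mulVec, hEH]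
    push_cast
    rfl
  set s1 : ℝ := ∑ m, Complex.normSq (E.mulVec u m) with hs1def
  set s2 : ℝ := ∑ m, Complex.normSq (u m) with hs2def
  have hfinal : ((Real.sqrt Z)⁻¹ * s1 + c * s2 : ℝ) = 0 := by
    have h3 := hz
    rw [hquad, dot_self_eq, dot_self_eq] at h3
    exact_mod_cast h3
  have hs1 : 0 ≤ s1 := Finset.sum_nonneg fun m _ => Complex.normSq_nonneg _
  have hs2 : 0 ≤ s2 := Finset.sum_nonneg fun m _ => Complex.normSq_nonneg _
  have hZs : 0 < (Real.sqrt Z)⁻¹ := by positivity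
  have hs20 : s2 = 0 := by nlinarith
  have hu0 : u = 0 := by
    funext m
    have h4 := (Finset.sum_eq_zero_iff_of_nonneg
      (fun m _ => Complex.normSq_nonneg (u m))).mp hs20 m (Finset.mem_univ m)
    simpa [Complex.normSq_eq_zero] using h4
  have h5 : S.mulVec w - (c : ℂ) • w = 0 := by rw [← hu]; exact hu0
  exact sub_eq_zero.mp h5
lemma entry_eq {d : ℕ} (v : Fin d → Fin d → ℂ) (N : Mat d) (k l : Fin d) :
    star (v k) ⬝ᵥ N.mulVec (v l) =
      ((Matrix.of fun m k' => v k' m)ᴴ * N * (Matrix.of fun m k' => v k' m)) k l := by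
  simp only [Matrix.mul_apply, Matrix.conjTranspose_apply, Matrix.of_apply,
    Matrix.mulVec, dotProduct, Pi.star_apply, Finset.sum_mul, Finset.mul_sum]
  rw [Finset.sum_comm]
  apply Finset.sum_congr rfl
  intro m _
  apply Finset.sum_congr rfl
  intro n _
  ring

lemma braket_conj {d : ℕ} (U N : Mat d) (a b : Fin d → ℂ) :
    star (U.mulVec a) ⬝ᵥ N.mulVec (U.mulVec b) =
      star a ⬝ᵥ (Uᴴ * N * U).mulVec b := by
  conv_rhs => rw [← Matrix.mulVec_mulVec, ← Matrix.mulVec_mulVec,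
    Matrix.dotProduct_mulVec, ← Matrix.star_mulVec]

lemma trace_mul_entries {d : ℕ} (P Q : Mat d) :
    (P * Q).trace = ∑ k, ∑ l, P k l * Q l k := by
  simp [Matrix.trace, Matrix.diag, Matrix.mul_apply]

lemma sandwich {d : ℕ} (W X Y Λ' : Mat d) (h1 : X * W = W * Λ') (h2 : Wᴴ * X = Λ' * Wᴴ) :
    Wᴴ * (Y * X - X * Y) * W = (Wᴴ * Y * W) * Λ' - Λ' * (Wᴴ * Y * W) := by
  rw [Matrix.mul_sub, Matrix.sub_mul]
  congr 1
  · rw [← mul_assoc Wᴴ Y X, mul_assoc (Wᴴ * Y) X W, h1, ← mul_assoc]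
  · rw [← mul_assoc Wᴴ X Y, h2, mul_assoc Λ' Wᴴ Y, mul_assoc Λ' (Wᴴ * Y) W]

lemma conj_unitary_smul {d : ℕ} (U X : Mat d) (hUu : Uᴴ * U = 1) (c : ℂ) :
    Uᴴ * (c • (U * X * Uᴴ)) * U = c • X := by
  rw [Matrix.mul_smul, Matrix.smul_mul]
  congr 1
  rw [mul_assoc U X Uᴴ, ← mul_assoc Uᴴ U (X * Uᴴ), hUu, one_mul, mul_assoc X Uᴴ U,
    hUu, mul_one]

lemma trace_conj_mul {d : ℕ} (W X1 X2 : Mat d) (h : W * Wᴴ = 1) :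
    (X1 * X2).trace = ((Wᴴ * X1 * W) * (Wᴴ * X2 * W)).trace := by
  have hc : ∀ X : Mat d, W * (Wᴴ * X) = X := fun X => by rw [← mul_assoc, h, one_mul]
  have key : (Wᴴ * X1 * W) * (Wᴴ * X2 * W) = Wᴴ * (X1 * X2) * W := by
    simp only [mul_assoc, hc]
  rw [key, Matrix.trace_mul_cycle, ← mul_assoc, h, one_mul]

lemma scalar_step {a b : ℂ} {lk ll : ℝ} (hk : 0 < lk) (hl : 0 < ll) :
    ((4 / (Real.sqrt lk + Real.sqrt ll) ^ 2 : ℝ) : ℂ) *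
        (-Complex.I * (a * (ll : ℂ) - (lk : ℂ) * a)) *
        (-Complex.I * (b * (lk : ℂ) - (ll : ℂ) * b)) =
      -4 * ((a * (Real.sqrt ll : ℂ) - (Real.sqrt lk : ℂ) * a) *
        (b * (Real.sqrt lk : ℂ) - (Real.sqrt ll : ℂ) * b)) := by
  have hsk : 0 < Real.sqrt lk := Real.sqrt_pos.mpr hk
  have hsl : 0 < Real.sqrt ll := Real.sqrt_pos.mpr hl
  have hlk : (lk : ℂ) = (Real.sqrt lk : ℂ) ^ 2 := by
    rw [← Complex.ofReal_pow, Real.sq_sqrt hk.le]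
  have hll : (ll : ℂ) = (Real.sqrt ll : ℂ) ^ 2 := by
    rw [← Complex.ofReal_pow, Real.sq_sqrt hl.le]
  have hne : (Real.sqrt lk : ℂ) + (Real.sqrt ll : ℂ) ≠ 0 := by
    have : (0 : ℝ) < Real.sqrt lk + Real.sqrt ll := by positivity
    rw [← Complex.ofReal_add]
    exact_mod_cast this.ne'
  rw [hlk, hll]
  push_cast
  field_simp
  ring_nf
  simp only [Complex.I_sq]
  ring
/-- Commutator form of the Wigner–Yanase information matrix:
`I^{WY}_{ij}(φ) = −4 Tr[[A_i, √ρ] [A_j, √ρ]]`. -/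
theorem wigner_yanase_commutator_form_pqc {d J : ℕ} (hd : 1 ≤ d)
    (H V G : _) (hH : ∀ j, (H j : Mat d).IsHermitian)
    (hV : ∀ j, V j ∈ Matrix.unitaryGroup (Fin d) ℂ)
    (hG : (G : Mat d).IsHermitian)
    (Z : ℝ) (hZpos : 0 < Z) (hZ : (NormedSpace.exp (-G)).trace = (Z : ℂ))
    (v : Fin d → Fin d → ℂ)
    (hortho : ∀ k l, star (v k) ⬝ᵥ v l = if k = l then 1 else 0)
    (lam : Fin d → ℝ) (hlampos : ∀ k, 0 < lam k)
    (hrhov : ∀ k, (thermal G Z).mulVec (v k) = (lam k : ℂ) • v k)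
    (φ : ℕ → ℝ) (i j : ℕ) (hi1 : 1 ≤ i) (hiJ : i ≤ J) (hj1 : 1 ≤ j) (hjJ : j ≤ J)
    (Di Dj : Mat d)
    (hDi : HasDerivAt (fun x : ℝ => rhoFun H V J G Z (Function.update φ i x)) Di (φ i))
    (hDj : HasDerivAt (fun x : ℝ => rhoFun H V J G Z (Function.update φ j x)) Dj (φ j)) :
    ∑ k : Fin d, ∑ l : Fin d,
        ((4 / (Real.sqrt (lam k) + Real.sqrt (lam l)) ^ 2 : ℝ) : ℂ) *
          braket ((Ufull H V φ J).mulVec (v k)) Di ((Ufull H V φ J).mulVec (v l)) *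
          braket ((Ufull H V φ J).mulVec (v l)) Dj ((Ufull H V φ J).mulVec (v k)) =
      -4 * ((Amat H V φ i * sqrtThermal G Z - sqrtThermal G Z * Amat H V φ i) *
          (Amat H V φ j * sqrtThermal G Z - sqrtThermal G Z * Amat H V φ j)).trace := by
  classical
  set U : Mat d := Ufull H V φ J with hUdef
  set S : Mat d := sqrtThermal G Z with hSdef
  set ρ0 : Mat d := thermal G Z with hρ0def
  set Ai : Mat d := Amat H V φ i with hAidef
  set Aj : Mat d := Amat H V φ j with hAjdef
  set W : Mat d := Matrix.of (fun m k => v k m) with hWdef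
  -- unitarity of U
  have hUmem : U ∈ Matrix.unitaryGroup (Fin d) ℂ :=
    descProd_unitary _ (layer_unitary H V hH hV φ) 1 J
  obtain ⟨-, -, hUu, hUu'⟩ := mem_unitary_mulcancel hUmem
  -- W is unitary
  have hWW : Wᴴ * W = 1 := by
    ext k l
    have h := hortho k l
    simp only [dotProduct, Pi.star_apply] at h
    simpa [hWdef, Matrix.mul_apply, Matrix.conjTranspose_apply, Matrix.one_apply] using h
  have hWW' : W * Wᴴ = 1 := mul_eq_one_comm.mp hWW
  -- eigen-relations
  set Λ : Mat d := Matrix.diagonal (fun k => (lam k : ℂ)) with hΛdef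
  set DS : Mat d := Matrix.diagonal (fun k => ((Real.sqrt (lam k) : ℝ) : ℂ)) with hDSdef
  have hρW : ρ0 * W = W * Λ := by
    ext m l
    have h := congrFun (hrhov l) m
    simp only [Matrix.mulVec, dotProduct, Pi.smul_apply, smul_eq_mul] at h
    rw [hΛdef, Matrix.mul_diagonal, Matrix.mul_apply]
    simpa [hWdef, mul_comm] using h
  have hSW : S * W = W * DS := by
    ext m l
    have h := congrFun (sqrtThermal_eigen hG hZpos (hlampos l) (hrhov l)) m
    simp only [Matrix.mulVec, dotProduct, Pi.smul_apply, smul_eq_mul] at h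
    rw [hDSdef, Matrix.mul_diagonal, Matrix.mul_apply]
    simpa [hWdef, hSdef, mul_comm] using h
  have hSH : Sᴴ = S := sqrtThermal_herm hG Z
  have hρH : ρ0ᴴ = ρ0 := by
    rw [hρ0def]
    unfold thermal
    rw [Matrix.conjTranspose_smul, ← Matrix.exp_conjTranspose _,
      Matrix.conjTranspose_neg, hG.eq]
    congr 1
    simp [Complex.ext_iff]
  have hΛH : Λᴴ = Λ := by
    rw [hΛdef]
    simp [Matrix.diagonal_conjTranspose, Pi.star_def, Complex.conj_ofReal]
  have hDSH : DSᴴ = DS := by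
    rw [hDSdef]
    simp [Matrix.diagonal_conjTranspose, Pi.star_def, Complex.conj_ofReal]
  have hWρ : Wᴴ * ρ0 = Λ * Wᴴ := by
    have h := congrArg Matrix.conjTranspose hρW
    rw [Matrix.conjTranspose_mul, Matrix.conjTranspose_mul, hρH, hΛH] at h
    exact h
  have hWS : Wᴴ * S = DS * Wᴴ := by
    have h := congrArg Matrix.conjTranspose hSW
    rw [Matrix.conjTranspose_mul, Matrix.conjTranspose_mul, hSH, hDSH] at h
    exact h
  -- identify the derivatives
  have hDival : Di = (-Complex.I) • (U * (Ai * ρ0 - ρ0 * Ai) * Uᴴ) :=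
    hDi.unique (rho_hasDerivAt H V hH hV G Z φ hi1 hiJ)
  have hDjval : Dj = (-Complex.I) • (U * (Aj * ρ0 - ρ0 * Aj) * Uᴴ) :=
    hDj.unique (rho_hasDerivAt H V hH hV G Z φ hj1 hjJ)
  -- braket values
  have hbra : ∀ (D Ax : Mat d), D = (-Complex.I) • (U * (Ax * ρ0 - ρ0 * Ax) * Uᴴ) →
      ∀ k l, braket (U.mulVec (v k)) D (U.mulVec (v l)) =
        (-Complex.I) * ((Wᴴ * Ax * W) k l * (lam l : ℂ) -
          (lam k : ℂ) * ((Wᴴ * Ax * W) k l)) := by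
    intro D Ax hD k l
    unfold braket
    rw [braket_conj, entry_eq v _ k l, ← hWdef, hD, conj_unitary_smul U _ hUu,
      Matrix.mul_smul, Matrix.smul_mul, sandwich W ρ0 Ax Λ hρW hWρ]
    simp [hΛdef, Matrix.sub_apply, Matrix.mul_diagonal, Matrix.diagonal_mul]
  -- trace side
  have htr : ((Ai * S - S * Ai) * (Aj * S - S * Aj)).trace =
      ∑ k, ∑ l, ((Wᴴ * Ai * W) k l * (Real.sqrt (lam l) : ℂ) -
          (Real.sqrt (lam k) : ℂ) * ((Wᴴ * Ai * W) k l)) *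
        ((Wᴴ * Aj * W) l k * (Real.sqrt (lam k) : ℂ) -
          (Real.sqrt (lam l) : ℂ) * ((Wᴴ * Aj * W) l k)) := by
    rw [trace_conj_mul W _ _ hWW', sandwich W S Ai DS hSW hWS,
      sandwich W S Aj DS hSW hWS, trace_mul_entries]
    apply Finset.sum_congr rfl
    intro k _
    apply Finset.sum_congr rfl
    intro l _
    simp [hDSdef, Matrix.sub_apply, Matrix.mul_diagonal, Matrix.diagonal_mul]
  rw [htr, Finset.mul_sum]
  apply Finset.sum_congr rfl
  intro k _
  rw [Finset.mul_sum]
  apply Finset.sum_congr rfl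
  intro l _
  rw [hbra Di Ai hDival k l, hbra Dj Aj hDjval l k]
  exact scalar_step (hlampos k) (hlampos l)
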